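/- Let h : ℝ → ℝ be real-analytic. If ∫₀^c √(c²−1)·h(s)/√(c²−s²) ds is constant on (1, ∞), then h = 0. -/

import Mathlib

open MeasureTheory intervalIntegral Real
open Set ENNReal NNReal
set_option maxHeartbeats 1000000


lemma local_ext (h : ℝ → ℝ) {x : ℝ} (hx : AnalyticAt ℝ h x) :
    ∃ (δ : NNReal) (Fx : ℂ → ℂ), 0 < δ ∧ AnalyticOnNhd ℂ Fx (Metric.ball (x:ℂ) δ) ∧
      ∀ y : ℝ, (y:ℂ) ∈ Metric.ball (x:ℂ) δ → Fx y = (h y : ℂ) := by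
  obtain ⟨p, r, hpr⟩ := hx
  obtain ⟨δ, hδ0, hδr⟩ : ∃ δ : NNReal, 0 < (δ : ℝ≥0∞) ∧ (δ : ℝ≥0∞) < r := by
    obtain ⟨δ, h1, h2⟩ := ENNReal.lt_iff_exists_nnreal_btwn.1 hpr.r_pos
    exact ⟨δ, h1, h2⟩
  have hδ0' : 0 < δ := by exact_mod_cast hδ0
  have hpball : HasFPowerSeriesOnBall h p x δ := hpr.mono hδ0 hδr.le
  have hδrad : (δ : ℝ≥0∞) < p.radius := lt_of_lt_of_le hδr hpr.r_le
  obtain ⟨C, hC0, hC⟩ := p.norm_mul_pow_le_of_lt_radius hδrad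
  set q : FormalMultilinearSeries ℂ ℂ ℂ :=
    fun n => (p.coeff n : ℂ) • ContinuousMultilinearMap.mkPiAlgebraFin ℂ n ℂ with hq
  have hq_apply : ∀ n (w : ℂ), (q n fun _ => w) = (p.coeff n : ℂ) * w ^ n := by
    intro n w
    simp [hq, ContinuousMultilinearMap.mkPiAlgebraFin_apply, List.prod_ofFn]
  have hqn : ∀ n, ‖q n‖ ≤ ‖p n‖ := by
    intro n
    have h1 : ‖q n‖ ≤ ‖(p.coeff n : ℂ)‖ * ‖ContinuousMultilinearMap.mkPiAlgebraFin ℂ n ℂ‖ := by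
      rw [hq]
      exact ContinuousMultilinearMap.opNorm_smul_le _ _
    have h2 : ‖ContinuousMultilinearMap.mkPiAlgebraFin ℂ n ℂ‖ ≤ 1 := by
      simpa using (ContinuousMultilinearMap.norm_mkPiAlgebraFin_le (𝕜 := ℂ) (A := ℂ) (n := n))
    have h3 : ‖(p.coeff n : ℂ)‖ = ‖p.coeff n‖ := Complex.norm_real _
    have h4 : ‖p.coeff n‖ ≤ ‖p n‖ := by
      have h5 := (p n).le_opNorm (fun _ => (1:ℝ))
      have h6 : (∏ _i : Fin n, ‖(1:ℝ)‖) = 1 := by simp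
      rw [h6, mul_one] at h5
      exact h5
    calc ‖q n‖ ≤ ‖(p.coeff n : ℂ)‖ * ‖ContinuousMultilinearMap.mkPiAlgebraFin ℂ n ℂ‖ := h1
      _ ≤ ‖p.coeff n‖ * 1 := by rw [h3]; gcongr
      _ ≤ ‖p n‖ := by simpa using h4
  have hqrad : (δ : ℝ≥0∞) ≤ q.radius := by
    apply q.le_radius_of_bound C
    intro n
    exact le_trans (by gcongr; exact (hqn n)) (hC n)
  have hq0 : 0 < q.radius := lt_of_lt_of_le hδ0 hqrad
  have hqs : HasFPowerSeriesOnBall q.sum q 0 (δ : ℝ≥0∞) :=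
    (q.hasFPowerSeriesOnBall hq0).mono hδ0 hqrad
  refine ⟨δ, fun z => q.sum (z - (x:ℂ)), hδ0', ?_, ?_⟩
  · intro z hz
    have hz' : z - (x:ℂ) ∈ Metric.eball (0:ℂ) (δ : ℝ≥0∞) := by
      rw [Metric.emetric_ball_nnreal]
      simpa [Metric.mem_ball, dist_eq_norm] using hz
    have h1 : AnalyticAt ℂ q.sum (z - (x:ℂ)) := hqs.analyticOnNhd _ hz'
    have h2 : AnalyticAt ℂ (fun w : ℂ => w - (x:ℂ)) z := (analyticAt_id).sub analyticAt_const
    have h3 : AnalyticAt ℂ (q.sum ∘ fun w : ℂ => w - (x:ℂ)) z :=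
      AnalyticAt.comp (g := q.sum) (f := fun w : ℂ => w - (x:ℂ)) (x := z) h1 h2
    exact h3
  · intro y hy
    have hyx : ‖y - x‖ < (δ:ℝ) := by
      have : dist (y:ℂ) (x:ℂ) = dist y x := Complex.isometry_ofReal.dist_eq y x
      simpa [Real.dist_eq, Real.norm_eq_abs, this] using (Metric.mem_ball.1 hy)
    have hmem : (y - x : ℝ) ∈ Metric.eball (0:ℝ) (δ : ℝ≥0∞) := by
      rw [Metric.emetric_ball_nnreal]
      simpa [Metric.mem_ball, dist_eq_norm] using hyx
    have hmemC : ((y:ℂ) - (x:ℂ)) ∈ Metric.eball (0:ℂ) (δ : ℝ≥0∞) := by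
      rw [Metric.emetric_ball_nnreal]
      have : ‖(y:ℂ) - (x:ℂ)‖ = ‖y - x‖ := by
        rw [← Complex.ofReal_sub]; exact Complex.norm_real _
      simpa [Metric.mem_ball, dist_eq_norm, this] using hyx
    have hre : HasSum (fun n => p n fun _ => (y - x)) (h y) := by
      have := hpball.hasSum hmem
      simpa using this
    have hco : HasSum (fun n => q n fun _ => ((y:ℂ) - (x:ℂ))) (q.sum ((y:ℂ) - (x:ℂ))) := by
      have := hqs.hasSum hmemC
      simpa using this
    have hre' : HasSum (fun n => ((p n fun _ => (y - x) : ℝ) : ℂ)) ((h y : ℂ)) :=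
      Complex.ofRealCLM.hasSum hre
    have : (fun n => ((p n fun _ => (y - x) : ℝ) : ℂ)) =
        (fun n => q n fun _ => ((y:ℂ) - (x:ℂ))) := by
      funext n
      rw [hq_apply]
      rw [FormalMultilinearSeries.apply_eq_pow_smul_coeff]
      rw [smul_eq_mul]
      push_cast
      ring
    rw [this] at hre'
    exact hco.unique hre'

lemma w_integrable : IntegrableOn (fun t : ℝ => (Real.sqrt (1 - t^2))⁻¹) (Ioo (0:ℝ) 1) volume := by
  have hcont : ContinuousOn Real.arcsin (Icc (0:ℝ) 1) := Real.continuous_arcsin.continuousOn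
  have hderiv : ∀ x ∈ Ioo (0:ℝ) 1, HasDerivAt Real.arcsin ((Real.sqrt (1 - x^2))⁻¹) x := by
    intro x hx
    have h1 : x ≠ -1 := by nlinarith [hx.1, hx.2]
    have h2 : x ≠ 1 := ne_of_lt hx.2
    simpa [one_div] using Real.hasDerivAt_arcsin h1 h2
  have hpos : ∀ x ∈ Ioo (0:ℝ) 1, 0 ≤ (Real.sqrt (1 - x^2))⁻¹ := fun x hx => by positivity
  exact (intervalIntegral.integrableOn_deriv_of_nonneg hcont hderiv hpos).mono_set
    Ioo_subset_Ioc_self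

lemma w_contOn : ContinuousOn (fun t : ℝ => (Real.sqrt (1 - t^2))⁻¹) (Ioo (0:ℝ) 1) := by
  apply ContinuousOn.inv₀
  · exact (Real.continuous_sqrt.comp (by continuity)).continuousOn
  · intro t ht
    have : 0 < 1 - t^2 := by nlinarith [ht.1, ht.2]
    positivity

lemma w_pos : ∀ t ∈ Ioo (0:ℝ) 1, 0 < (Real.sqrt (1 - t^2))⁻¹ := by
  intro t ht
  have : 0 < 1 - t^2 := by nlinarith [ht.1, ht.2]
  positivity

lemma global_ext (h : ℝ → ℝ) (hanalytic : ∀ x : ℝ, AnalyticAt ℝ h x) :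
    ∃ (U : Set ℂ) (F : ℂ → ℂ), IsOpen U ∧ (∀ x : ℝ, (x:ℂ) ∈ U) ∧
      AnalyticOnNhd ℂ F U ∧ (∀ x : ℝ, F x = (h x : ℂ)) := by
  classical
  choose δ Fl hδ hFa hFr using fun x : ℝ => local_ext h (hanalytic x)
  have hdistR : ∀ a b : ℝ, dist ((a:ℂ)) ((b:ℂ)) = dist a b := fun a b =>
    Complex.isometry_ofReal.dist_eq a b
  have hcons : ∀ a b : ℝ, ∀ z : ℂ,
      z ∈ Metric.ball (a:ℂ) (δ a) ∩ Metric.ball (b:ℂ) (δ b) → Fl a z = Fl b z := by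
    intro a b z hz
    set V := Metric.ball (a:ℂ) (δ a) ∩ Metric.ball (b:ℂ) (δ b) with hV
    have hVopen : IsOpen V := Metric.isOpen_ball.inter Metric.isOpen_ball
    have hVconn : IsPreconnected V :=
      ((convex_ball _ _).inter (convex_ball _ _)).isPreconnected
    have hab : dist a b < (δ a : ℝ) + (δ b : ℝ) := by
      have := dist_triangle ((a:ℂ)) z ((b:ℂ))
      have h1 : dist ((a:ℂ)) z < (δ a : ℝ) := by
        rw [dist_comm]; exact Metric.mem_ball.1 hz.1
      have h2 : dist z ((b:ℂ)) < (δ b : ℝ) := Metric.mem_ball.1 hz.2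
      calc dist a b = dist ((a:ℂ)) ((b:ℂ)) := (hdistR a b).symm
        _ ≤ dist ((a:ℂ)) z + dist z ((b:ℂ)) := dist_triangle _ _ _
        _ < (δ a : ℝ) + (δ b : ℝ) := by linarith
    set w : ℝ := ((δ b : ℝ) * a + (δ a : ℝ) * b) / ((δ a : ℝ) + (δ b : ℝ)) with hw
    have hda : (0:ℝ) < δ a := hδ a
    have hdb : (0:ℝ) < δ b := hδ b
    have hsum : (0:ℝ) < (δ a : ℝ) + (δ b : ℝ) := by linarith
    have hwa : |w - a| < (δ a : ℝ) := by
      have : w - a = (δ a : ℝ) * (b - a) / ((δ a : ℝ) + (δ b : ℝ)) := by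
        rw [hw]; field_simp; ring
      rw [this, abs_div, abs_of_pos hsum, div_lt_iff₀ hsum, abs_mul, abs_of_pos hda]
      have : |b - a| < (δ a : ℝ) + (δ b : ℝ) := by
        rw [abs_sub_comm]; simpa [Real.dist_eq] using hab
      calc (δ a : ℝ) * |b - a| < (δ a : ℝ) * ((δ a : ℝ) + (δ b : ℝ)) := by
            exact mul_lt_mul_of_pos_left this hda
        _ = (δ a : ℝ) * ((δ a : ℝ) + (δ b : ℝ)) := rfl
    have hwb : |w - b| < (δ b : ℝ) := by
      have : w - b = (δ b : ℝ) * (a - b) / ((δ a : ℝ) + (δ b : ℝ)) := by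
        rw [hw]; field_simp; ring
      rw [this, abs_div, abs_of_pos hsum, div_lt_iff₀ hsum, abs_mul, abs_of_pos hdb]
      have : |a - b| < (δ a : ℝ) + (δ b : ℝ) := by simpa [Real.dist_eq] using hab
      exact mul_lt_mul_of_pos_left this hdb
    have hwV : (w:ℂ) ∈ V := by
      constructor
      · rw [Metric.mem_ball, hdistR, Real.dist_eq]; exact hwa
      · rw [Metric.mem_ball, hdistR, Real.dist_eq]; exact hwb
    -- sequence approaching w
    set u : ℕ → ℂ := fun n => ((w + 1 / (n + 1) : ℝ) : ℂ) with hu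
    have hulim : Filter.Tendsto u Filter.atTop (nhds ((w:ℂ))) := by
      apply Filter.Tendsto.comp (Complex.continuous_ofReal.tendsto w)
      have : Filter.Tendsto (fun n : ℕ => w + 1 / (n + 1 : ℝ)) Filter.atTop (nhds (w + 0)) :=
        (tendsto_const_nhds).add tendsto_one_div_add_atTop_nhds_zero_nat
      simpa using this
    have hune : ∀ n, u n ≠ (w:ℂ) := by
      intro n
      simp only [hu, ne_eq, Complex.ofReal_inj]
      intro hcontr
      have : (1 : ℝ) / (n + 1) = 0 := by
        have := congrArg (fun t => t - w) hcontr
        simpa using this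
      have : (0:ℝ) < 1 / (n+1) := by positivity
      simp_all
    have hulim' : Filter.Tendsto u Filter.atTop (nhdsWithin ((w:ℂ)) {(w:ℂ)}ᶜ) := by
      apply tendsto_nhdsWithin_of_tendsto_nhds_of_eventually_within _ hulim
      exact Filter.Eventually.of_forall fun n => hune n
    have hfreq : ∃ᶠ z in nhdsWithin ((w:ℂ)) {(w:ℂ)}ᶜ, Fl a z = Fl b z := by
      apply hulim'.frequently
      apply Filter.Eventually.frequently
      have hmem : ∀ᶠ n in Filter.atTop, u n ∈ V := hulim.eventually (hVopen.mem_nhds hwV)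
      filter_upwards [hmem] with n hn
      have h1 : Fl a (u n) = (h (w + 1 / (n + 1)) : ℂ) := hFr a _ hn.1
      have h2 : Fl b (u n) = (h (w + 1 / (n + 1)) : ℂ) := hFr b _ hn.2
      rw [h1, h2]
    have heq := AnalyticOnNhd.eqOn_of_preconnected_of_frequently_eq
      (fun z hz => hFa a z hz.1) (fun z hz => hFa b z hz.2) hVconn hwV hfreq
    exact heq hz
  refine ⟨⋃ x : ℝ, Metric.ball (x:ℂ) (δ x),
    fun z => if hz : ∃ x : ℝ, z ∈ Metric.ball (x:ℂ) (δ x) then Fl hz.choose z else 0,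
    isOpen_iUnion fun _ => Metric.isOpen_ball, ?_, ?_, ?_⟩
  · intro x
    exact mem_iUnion.2 ⟨x, Metric.mem_ball_self (hδ x)⟩
  · intro z hz
    obtain ⟨x, hx⟩ := mem_iUnion.1 hz
    have hev : ∀ y ∈ Metric.ball (x:ℂ) (δ x),
        Fl x y = (if hy : ∃ x : ℝ, y ∈ Metric.ball (x:ℂ) (δ x) then Fl hy.choose y else 0) := by
      intro y hy
      have hex : ∃ x : ℝ, y ∈ Metric.ball (x:ℂ) (δ x) := ⟨x, hy⟩
      rw [dif_pos hex]
      exact hcons x hex.choose y ⟨hy, hex.choose_spec⟩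
    exact (hFa x z hx).congr
      (Filter.eventuallyEq_of_mem (Metric.isOpen_ball.mem_nhds hx) hev)
  · intro x
    have hx : (x:ℂ) ∈ Metric.ball (x:ℂ) (δ x) := Metric.mem_ball_self (hδ x)
    have hex : ∃ a : ℝ, (x:ℂ) ∈ Metric.ball (a:ℂ) (δ a) := ⟨x, hx⟩
    show (if hz : ∃ a : ℝ, (x:ℂ) ∈ Metric.ball (a:ℂ) (δ a) then Fl hz.choose (x:ℂ) else 0)
      = (h x : ℂ)
    rw [dif_pos hex]
    rw [hcons hex.choose x _ ⟨hex.choose_spec, hx⟩]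
    exact hFr x x hx

lemma g_analytic (h : ℝ → ℝ) (hanalytic : ∀ x : ℝ, AnalyticAt ℝ h x) (c : ℝ) :
    AnalyticAt ℝ (fun c : ℝ => ∫ t in Ioo (0:ℝ) 1,
      h (c * t) * (Real.sqrt (1 - t^2))⁻¹) c := by
  obtain ⟨U, F, hUopen, hUreal, hFa, hFreal⟩ := global_ext h hanalytic
  set w : ℝ → ℝ := fun t => (Real.sqrt (1 - t^2))⁻¹ with hwdef
  set S : Set ℂ := {z : ℂ | ∀ t ∈ Icc (0:ℝ) 1, z * (t:ℂ) ∈ U} with hSdef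
  set G : ℂ → ℂ := fun z => ∫ t in Ioo (0:ℝ) 1, (w t : ℂ) * F (z * t) with hGdef
  -- scaling distance estimate
  have hdist : ∀ (z z' : ℂ) (t : ℝ), t ∈ Icc (0:ℝ) 1 →
      dist (z * (t:ℂ)) (z' * (t:ℂ)) ≤ dist z z' := by
    intro z z' t ht
    have : dist (z * (t:ℂ)) (z' * (t:ℂ)) = dist z z' * ‖(t:ℂ)‖ := by
      rw [dist_eq_norm, dist_eq_norm, ← sub_mul]
      simp [map_mul]
    rw [this]
    have habs : ‖(t:ℂ)‖ ≤ 1 := by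
      rw [Complex.norm_real, Real.norm_eq_abs, abs_of_nonneg ht.1]; exact ht.2
    calc dist z z' * ‖(t:ℂ)‖ ≤ dist z z' * 1 := by
          exact mul_le_mul_of_nonneg_left habs dist_nonneg
      _ = dist z z' := mul_one _
  -- the tube lemma data at a point of S
  have hSball : ∀ z₀ ∈ S, ∃ ε : ℝ, 0 < ε ∧
      Metric.thickening ε ((fun t : ℝ => z₀ * (t:ℂ)) '' Icc (0:ℝ) 1) ⊆ U := by
    intro z₀ hz₀
    have hK : IsCompact ((fun t : ℝ => z₀ * (t:ℂ)) '' Icc (0:ℝ) 1) :=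
      isCompact_Icc.image (by continuity)
    have hKU : ((fun t : ℝ => z₀ * (t:ℂ)) '' Icc (0:ℝ) 1) ⊆ U := by
      rintro _ ⟨t, ht, rfl⟩; exact hz₀ t ht
    exact hK.exists_thickening_subset_open hUopen hKU
  have hSopen : IsOpen S := by
    rw [Metric.isOpen_iff]
    intro z₀ hz₀
    obtain ⟨ε, hε0, hεsub⟩ := hSball z₀ hz₀
    refine ⟨ε, hε0, ?_⟩
    intro z hz t ht
    apply hεsub
    rw [Metric.mem_thickening_iff]
    exact ⟨z₀ * (t:ℂ), mem_image_of_mem _ ht,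
      lt_of_le_of_lt (hdist z z₀ t ht) (Metric.mem_ball.1 hz)⟩
  have hSreal : ∀ c : ℝ, (c:ℂ) ∈ S := by
    intro c t ht
    rw [← Complex.ofReal_mul]
    exact hUreal _
  -- differentiability of G on S
  have hGdiff : ∀ z₀ ∈ S, DifferentiableAt ℂ G z₀ := by
    intro z₀ hz₀
    obtain ⟨ε, hε0, hεsub⟩ := hSball z₀ hz₀
    set Kim : Set ℂ := (fun t : ℝ => z₀ * (t:ℂ)) '' Icc (0:ℝ) 1 with hKim
    have hK : IsCompact Kim := isCompact_Icc.image (by continuity)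
    set K2 : Set ℂ := Metric.cthickening (ε/2) Kim with hK2def
    have hK2 : IsCompact K2 := hK.cthickening
    have hK2U : K2 ⊆ U := by
      refine subset_trans ?_ hεsub
      exact Metric.cthickening_subset_thickening' hε0 (by linarith) _
    -- membership of z*t in K2 for z in closed ball
    have hmem2 : ∀ z ∈ Metric.ball z₀ (ε/2), ∀ t ∈ Icc (0:ℝ) 1, z * (t:ℂ) ∈ K2 := by
      intro z hz t ht
      have hd : dist (z * (t:ℂ)) (z₀ * (t:ℂ)) ≤ ε/2 :=
        le_trans (hdist z z₀ t ht) (le_of_lt (Metric.mem_ball.1 hz))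
      exact Metric.mem_cthickening_of_dist_le (z * (t:ℂ)) (z₀ * (t:ℂ)) _ _
        (mem_image_of_mem _ ht) hd
    -- bounds
    obtain ⟨M, hM⟩ := hK2.exists_bound_of_continuousOn
      ((hFa.deriv).continuousOn.mono hK2U)
    obtain ⟨M₀, hM₀⟩ := hK2.exists_bound_of_continuousOn (hFa.continuousOn.mono hK2U)
    have hwmeas : AEStronglyMeasurable w (volume.restrict (Ioo (0:ℝ) 1)) :=
      w_contOn.aestronglyMeasurable measurableSet_Ioo
    have hwint : Integrable w (volume.restrict (Ioo (0:ℝ) 1)) := w_integrable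
    have hwnn : ∀ᵐ t ∂(volume.restrict (Ioo (0:ℝ) 1)), 0 ≤ w t := by
      filter_upwards [ae_restrict_mem measurableSet_Ioo] with t ht
      positivity
    -- measurability of integrand families
    have hmeasz : ∀ z ∈ Metric.ball z₀ (ε/2),
        AEStronglyMeasurable (fun t : ℝ => (w t : ℂ) * F (z * t))
          (volume.restrict (Ioo (0:ℝ) 1)) := by
      intro z hz
      apply ContinuousOn.aestronglyMeasurable _ measurableSet_Ioo
      apply ContinuousOn.mul
      · exact Complex.continuous_ofReal.comp_continuousOn w_contOn
      · apply ContinuousOn.comp (hFa.continuousOn.mono hK2U) _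
          (fun t ht => hmem2 z hz t (Ioo_subset_Icc_self ht))
        exact (continuous_const.mul Complex.continuous_ofReal).continuousOn
    have hmeasz' : AEStronglyMeasurable (fun t : ℝ => (w t : ℂ) * (deriv F (z₀ * t) * (t:ℂ)))
        (volume.restrict (Ioo (0:ℝ) 1)) := by
      apply ContinuousOn.aestronglyMeasurable _ measurableSet_Ioo
      apply ContinuousOn.mul
      · exact Complex.continuous_ofReal.comp_continuousOn w_contOn
      · apply ContinuousOn.mul
        · apply ContinuousOn.comp ((hFa.deriv).continuousOn.mono hK2U) _
            (fun t ht => hmem2 z₀ (Metric.mem_ball_self (by linarith)) t (Ioo_subset_Icc_self ht))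
          exact (continuous_const.mul Complex.continuous_ofReal).continuousOn
        · exact Complex.continuous_ofReal.continuousOn
    have key := _root_.hasDerivAt_integral_of_dominated_loc_of_deriv_le (μ := volume.restrict (Ioo (0:ℝ) 1)) (s := Metric.ball z₀ (ε/2))
      (F := fun z t => (w t : ℂ) * F (z * t))
      (F' := fun z t => (w t : ℂ) * (deriv F (z * t) * (t:ℂ)))
      (x₀ := z₀) (bound := fun t => (max M 0) * w t)
      (Metric.ball_mem_nhds z₀ (by linarith)) ?_ ?_ ?_ ?_ ?_ ?_
    · exact key.2.differentiableAt
    · filter_upwards [Metric.ball_mem_nhds z₀ (by linarith : (0:ℝ) < ε/2)] with z hz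
        using hmeasz z hz
    · -- integrability at z₀
      apply Integrable.mono (hwint.const_mul (max M₀ 0))
        (hmeasz z₀ (Metric.mem_ball_self (by linarith)))
      filter_upwards [ae_restrict_mem measurableSet_Ioo] with t ht
      have h1 : ‖(w t : ℂ) * F ((z₀:ℂ) * t)‖ = |w t| * ‖F (z₀ * t)‖ := by
        rw [norm_mul, Complex.norm_real, Real.norm_eq_abs]
      rw [h1]
      have hw0 : 0 ≤ w t := by positivity
      have h2 : ‖F (z₀ * t)‖ ≤ max M₀ 0 := le_trans
        (hM₀ _ (hmem2 z₀ (Metric.mem_ball_self (by linarith)) t (Ioo_subset_Icc_self ht)))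
        (le_max_left _ _)
      calc |w t| * ‖F (z₀ * t)‖ ≤ w t * max M₀ 0 := by
            rw [abs_of_nonneg hw0]; exact mul_le_mul_of_nonneg_left h2 hw0
        _ = max M₀ 0 * w t := mul_comm _ _
        _ ≤ ‖max M₀ 0 * w t‖ := le_abs_self _
    · exact hmeasz'
    · -- bound on derivative
      filter_upwards [ae_restrict_mem measurableSet_Ioo] with t ht z hz
      have hw0 : 0 ≤ w t := by positivity
      have habs : ‖(t:ℂ)‖ ≤ 1 := by
        rw [Complex.norm_real, Real.norm_eq_abs, abs_of_nonneg (le_of_lt ht.1)]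
        exact le_of_lt ht.2
      have h1 : ‖(w t : ℂ) * (deriv F (z * t) * (t:ℂ))‖
          = w t * (‖deriv F (z * t)‖ * ‖(t:ℂ)‖) := by
        rw [norm_mul, norm_mul, Complex.norm_real, Real.norm_eq_abs, abs_of_nonneg hw0]
      rw [h1]
      have h2 : ‖deriv F (z * t)‖ ≤ max M 0 := le_trans
        (hM _ (hmem2 z hz t (Ioo_subset_Icc_self ht))) (le_max_left _ _)
      calc w t * (‖deriv F (z * t)‖ * ‖(t:ℂ)‖)
          ≤ w t * (max M 0 * 1) := by
            apply mul_le_mul_of_nonneg_left _ hw0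
            exact mul_le_mul h2 habs (norm_nonneg _) (le_max_right _ _)
        _ = max M 0 * w t := by ring
    · exact hwint.const_mul _
    · -- differentiability in z
      filter_upwards [ae_restrict_mem measurableSet_Ioo] with t ht z hz
      have hzU : z * (t:ℂ) ∈ U := hK2U (hmem2 z hz t (Ioo_subset_Icc_self ht))
      have hF' : HasDerivAt F (deriv F (z * t)) (z * t) :=
        ((hFa _ hzU).differentiableAt).hasDerivAt
      have hmul : HasDerivAt (fun z : ℂ => z * (t:ℂ)) (t:ℂ) z := hasDerivAt_mul_const _
      have := (hF'.comp z hmul).const_mul ((w t : ℂ))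
      simpa [Function.comp] using this
  have hGanalytic : AnalyticOnNhd ℂ G S :=
    DifferentiableOn.analyticOnNhd
      (fun z hz => (hGdiff z hz).differentiableWithinAt) hSopen
  -- real values
  have hGreal : ∀ c : ℝ, G (c:ℂ) =
      ((∫ t in Ioo (0:ℝ) 1, h (c * t) * w t : ℝ) : ℂ) := by
    intro c
    have hcong : ∀ t ∈ Ioo (0:ℝ) 1,
        (w t : ℂ) * F ((c:ℂ) * t) = ((h (c * t) * w t : ℝ) : ℂ) := by
      intro t ht
      rw [← Complex.ofReal_mul, hFreal (c * t)]
      push_cast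
      ring
    rw [hGdef]
    simp only
    rw [setIntegral_congr_fun measurableSet_Ioo hcong]
    exact integral_ofReal
  -- conclude
  have h1 : AnalyticAt ℂ G (c:ℂ) := hGanalytic _ (hSreal c)
  have h2 : AnalyticAt ℝ G (c:ℂ) := h1.restrictScalars
  have h3 : AnalyticAt ℝ (fun x : ℝ => (x:ℂ)) c := Complex.ofRealCLM.analyticAt c
  have h4 : AnalyticAt ℝ (G ∘ fun x : ℝ => (x:ℂ)) c :=
    AnalyticAt.comp (g := G) (f := fun x : ℝ => (x:ℂ)) (x := c) h2 h3
  have h5 : AnalyticAt ℝ (Complex.reCLM ∘ (G ∘ fun x : ℝ => (x:ℂ))) c :=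
    AnalyticAt.comp (Complex.reCLM.analyticAt _) h4
  have h6 : (Complex.reCLM ∘ (G ∘ fun x : ℝ => (x:ℂ)))
      = fun c : ℝ => ∫ t in Ioo (0:ℝ) 1, h (c * t) * w t := by
    funext x
    simp only [Function.comp_apply, hGreal x]
    exact Complex.ofReal_re _
  rw [← h6]
  exact h5

lemma subst_lemma (h : ℝ → ℝ) {c : ℝ} (hc : 0 < c) :
    (∫ s in (0:ℝ)..c, h s / Real.sqrt (c^2 - s^2))
      = ∫ t in Ioo (0:ℝ) 1, h (c * t) * (Real.sqrt (1 - t^2))⁻¹ := by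
  rw [intervalIntegral.integral_of_le (le_of_lt hc), integral_Ioc_eq_integral_Ioo]
  have himg : Ioo (0:ℝ) c = (fun t => c * t) '' Ioo (0:ℝ) 1 := by
    ext x
    simp only [mem_image, mem_Ioo]
    constructor
    · rintro ⟨hx0, hxc⟩
      exact ⟨x / c, ⟨by positivity, (div_lt_one hc).2 hxc⟩, by field_simp⟩
    · rintro ⟨t, ⟨ht0, ht1⟩, rfl⟩
      exact ⟨by positivity, by nlinarith⟩
  have hderiv : ∀ t ∈ Ioo (0:ℝ) 1, HasDerivWithinAt (fun t => c * t) c (Ioo (0:ℝ) 1) t := by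
    intro t ht
    have : HasDerivAt (fun t : ℝ => c * t) c t := by
      simpa using (hasDerivAt_id t).const_mul c
    exact this.hasDerivWithinAt
  have hinj : InjOn (fun t => c * t) (Ioo (0:ℝ) 1) :=
    (mul_right_injective₀ (ne_of_gt hc)).injOn
  rw [himg, integral_image_eq_integral_abs_deriv_smul measurableSet_Ioo hderiv hinj]
  apply setIntegral_congr_fun measurableSet_Ioo
  intro t ht
  have h1 : c^2 - (c*t)^2 = c^2 * (1 - t^2) := by ring
  have h2 : (0:ℝ) < 1 - t^2 := by nlinarith [ht.1, ht.2]
  have h3 : Real.sqrt (1 - t^2) ≠ 0 := by positivity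
  simp only [smul_eq_mul]
  rw [h1, Real.sqrt_mul (sq_nonneg c), Real.sqrt_sq hc.le, abs_of_pos hc]
  rw [mul_div_assoc'] -- c * (h (c*t)) / (c * √..)? check
  rw [mul_div_mul_left _ _ (ne_of_gt hc), div_eq_mul_inv]

lemma iter_analytic (h : ℝ → ℝ) (hanalytic : ∀ x : ℝ, AnalyticAt ℝ h x) (n : ℕ) :
    AnalyticOnNhd ℝ (iteratedDeriv n h) univ := by
  induction n with
  | zero => rw [iteratedDeriv_zero]; exact fun x _ => hanalytic x
  | succ n ih =>
    rw [iteratedDeriv_succ]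
    exact ih.deriv

lemma gn_hasDerivAt (h : ℝ → ℝ) (hanalytic : ∀ x : ℝ, AnalyticAt ℝ h x) (n : ℕ) (c₀ : ℝ) :
    HasDerivAt
      (fun c : ℝ => ∫ t in Ioo (0:ℝ) 1,
        t^n * iteratedDeriv n h (c*t) * (Real.sqrt (1-t^2))⁻¹)
      (∫ t in Ioo (0:ℝ) 1,
        t^(n+1) * iteratedDeriv (n+1) h (c₀*t) * (Real.sqrt (1-t^2))⁻¹) c₀ := by
  set w : ℝ → ℝ := fun t => (Real.sqrt (1 - t^2))⁻¹ with hwdef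
  have hwint : Integrable w (volume.restrict (Ioo (0:ℝ) 1)) := w_integrable
  have hcont : ∀ m : ℕ, Continuous (iteratedDeriv m h) := fun m =>
    continuous_iff_continuousAt.2 fun x => ((iter_analytic h hanalytic m) x (mem_univ x)).continuousAt
  have hder : ∀ x : ℝ, HasDerivAt (iteratedDeriv n h) (iteratedDeriv (n+1) h x) x := by
    intro x
    have := ((iter_analytic h hanalytic n) x (mem_univ x)).differentiableAt.hasDerivAt
    rwa [← iteratedDeriv_succ] at this
  -- bounds on the compact interval
  set A : ℝ := |c₀| + 1 with hA
  obtain ⟨M, hM⟩ := (isCompact_Icc (a := -A) (b := A)).exists_bound_of_continuousOn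
    (hcont (n+1)).continuousOn
  obtain ⟨M₀, hM₀⟩ := (isCompact_Icc (a := -A) (b := A)).exists_bound_of_continuousOn
    (hcont n).continuousOn
  have hmemA : ∀ c : ℝ, c ∈ Metric.ball c₀ 1 → ∀ t ∈ Ioo (0:ℝ) 1, c * t ∈ Icc (-A) A := by
    intro c hc t ht
    have h1 : |c| ≤ A := by
      have := abs_sub_abs_le_abs_sub c c₀
      have h2 : |c - c₀| < 1 := by simpa [Real.dist_eq] using Metric.mem_ball.1 hc
      rw [hA]; linarith
    have h2 : |c * t| ≤ |c| := by
      rw [abs_mul, abs_of_pos ht.1]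
      calc |c| * t ≤ |c| * 1 := mul_le_mul_of_nonneg_left ht.2.le (abs_nonneg c)
        _ = |c| := mul_one _
    rw [mem_Icc, ← abs_le]
    linarith
  have hmeasfam : ∀ (m : ℕ) (c : ℝ), AEStronglyMeasurable
      (fun t : ℝ => t^m * iteratedDeriv m h (c*t) * w t) (volume.restrict (Ioo (0:ℝ) 1)) := by
    intro m c
    apply ContinuousOn.aestronglyMeasurable _ measurableSet_Ioo
    apply ContinuousOn.mul _ w_contOn
    exact ((continuous_pow m).continuousOn).mul
      (((hcont m).comp (continuous_const.mul continuous_id)).continuousOn)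
  have key := _root_.hasDerivAt_integral_of_dominated_loc_of_deriv_le
    (μ := volume.restrict (Ioo (0:ℝ) 1)) (s := Metric.ball c₀ 1)
    (F := fun c t => t^n * iteratedDeriv n h (c*t) * w t)
    (F' := fun c t => t^(n+1) * iteratedDeriv (n+1) h (c*t) * w t)
    (x₀ := c₀) (bound := fun t => (max M 0) * w t)
    (Metric.ball_mem_nhds c₀ one_pos) ?_ ?_ ?_ ?_ ?_ ?_
  · exact key.2
  · filter_upwards with c using hmeasfam n c
  · -- integrability at c₀
    apply Integrable.mono (hwint.const_mul (max M₀ 0)) (hmeasfam n c₀)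
    filter_upwards [ae_restrict_mem measurableSet_Ioo] with t ht
    have hw0 : 0 ≤ w t := by positivity
    have ht1 : |t| ≤ 1 := by
      rw [abs_of_pos ht.1]; exact ht.2.le
    have h2 : |iteratedDeriv n h (c₀ * t)| ≤ max M₀ 0 := by
      refine le_trans ?_ (le_max_left _ _)
      simpa [Real.norm_eq_abs] using
        hM₀ _ (hmemA c₀ (Metric.mem_ball_self one_pos) t ht)
    have : |t^n * iteratedDeriv n h (c₀*t) * w t| ≤ max M₀ 0 * w t := by
      rw [abs_mul, abs_mul, abs_of_nonneg hw0]
      have h3 : |t^n| ≤ 1 := by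
        rw [abs_pow]; exact pow_le_one₀ (abs_nonneg t) ht1
      calc |t^n| * |iteratedDeriv n h (c₀*t)| * w t
          ≤ 1 * (max M₀ 0) * w t := by
            apply mul_le_mul_of_nonneg_right _ hw0
            exact mul_le_mul h3 h2 (abs_nonneg _) zero_le_one
        _ = max M₀ 0 * w t := by ring
    calc ‖t^n * iteratedDeriv n h (c₀*t) * w t‖ = |t^n * iteratedDeriv n h (c₀*t) * w t| := rfl
      _ ≤ max M₀ 0 * w t := this
      _ ≤ ‖max M₀ 0 * w t‖ := le_abs_self _
  · exact hmeasfam (n+1) c₀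
  · -- bound
    filter_upwards [ae_restrict_mem measurableSet_Ioo] with t ht c hc
    have hw0 : 0 ≤ w t := by positivity
    have ht1 : |t| ≤ 1 := by rw [abs_of_pos ht.1]; exact ht.2.le
    have h2 : |iteratedDeriv (n+1) h (c * t)| ≤ max M 0 := by
      refine le_trans ?_ (le_max_left _ _)
      simpa [Real.norm_eq_abs] using hM _ (hmemA c hc t ht)
    have h3 : |t^(n+1)| ≤ 1 := by
      rw [abs_pow]; exact pow_le_one₀ (abs_nonneg t) ht1
    calc ‖t^(n+1) * iteratedDeriv (n+1) h (c*t) * w t‖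
        = |t^(n+1)| * |iteratedDeriv (n+1) h (c*t)| * w t := by
          rw [Real.norm_eq_abs, abs_mul, abs_mul, abs_of_nonneg hw0]
      _ ≤ 1 * (max M 0) * w t := by
          apply mul_le_mul_of_nonneg_right _ hw0
          exact mul_le_mul h3 h2 (abs_nonneg _) zero_le_one
      _ = max M 0 * w t := by ring
  · exact hwint.const_mul _
  · -- differentiability
    filter_upwards [ae_restrict_mem measurableSet_Ioo] with t ht c hc
    have h1 : HasDerivAt (fun c : ℝ => c * t) t c := hasDerivAt_mul_const t
    have h2 : HasDerivAt (fun c : ℝ => iteratedDeriv n h (c * t))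
        (iteratedDeriv (n+1) h (c*t) * t) c := HasDerivAt.comp (h₂ := iteratedDeriv n h) c (hder (c*t)) h1
    have h3 := (h2.const_mul (t^n)).mul_const (w t)
    rw [show t^(n+1) * iteratedDeriv (n+1) h (c*t) * w t
        = t ^ n * (iteratedDeriv (n + 1) h (c * t) * t) * w t by ring]
    exact h3

/-- If `h` is real-analytic and `∫₀^c √(c²−1)·h(s)/√(c²−s²) ds` is constant on
`(1,∞)`, then `h = 0`. -/
theorem stmt_6 (h : ℝ → ℝ) (hanalytic : ∀ x : ℝ, AnalyticAt ℝ h x)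
    (hint : ∀ c > (1:ℝ), IntervalIntegrable
      (fun s => Real.sqrt (c ^ 2 - 1) * h s / Real.sqrt (c ^ 2 - s ^ 2)) volume 0 c)
    (K : ℝ)
    (hH : ∀ c > (1:ℝ),
      (∫ s in (0:ℝ)..c, Real.sqrt (c ^ 2 - 1) * h s / Real.sqrt (c ^ 2 - s ^ 2)) = K) :
    ∀ x, h x = 0 := by
  classical
  set g : ℝ → ℝ := fun c => ∫ t in Ioo (0:ℝ) 1, h (c*t) * (Real.sqrt (1-t^2))⁻¹ with hgdef
  have hgan : ∀ c : ℝ, AnalyticAt ℝ g c := g_analytic h hanalytic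
  have hKrel : ∀ c > (1:ℝ), Real.sqrt (c^2 - 1) * g c = K := by
    intro c hc
    have hc0 : (0:ℝ) < c := by linarith
    have e1 : Real.sqrt (c^2-1) * g c
        = ∫ s in (0:ℝ)..c, Real.sqrt (c^2-1) * (h s / Real.sqrt (c^2 - s^2)) := by
      rw [hgdef]
      simp only
      rw [← subst_lemma h hc0, ← intervalIntegral.integral_const_mul]
    rw [e1, ← hH c hc]
    congr 1
    funext s
    rw [mul_div_assoc]
  have hK0 : K = 0 := by
    have hcont : ContinuousAt (fun c : ℝ => Real.sqrt (c^2-1) * g c) 1 := by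
      apply ContinuousAt.mul
      · exact (Real.continuous_sqrt.comp (by continuity)).continuousAt
      · exact (hgan 1).continuousAt
    have h1 : Filter.Tendsto (fun c : ℝ => Real.sqrt (c^2-1) * g c)
        (nhdsWithin 1 (Ioi 1)) (nhds 0) := by
      have h2 := hcont.tendsto.mono_left (nhdsWithin_le_nhds (s := Ioi (1:ℝ)))
      have h3 : Real.sqrt ((1:ℝ)^2-1) * g 1 = 0 := by
        norm_num
      rwa [h3] at h2
    have h4 : Filter.Tendsto (fun c : ℝ => Real.sqrt (c^2-1) * g c)
        (nhdsWithin 1 (Ioi 1)) (nhds K) := by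
      apply Filter.Tendsto.congr' _ tendsto_const_nhds
      filter_upwards [self_mem_nhdsWithin] with c hc
      exact (hKrel c hc).symm
    exact tendsto_nhds_unique h4 h1
  have hg1 : ∀ c, 1 < c → g c = 0 := by
    intro c hc
    have hpos : (0:ℝ) < c^2 - 1 := by nlinarith
    have h1 : Real.sqrt (c^2-1) ≠ 0 := by positivity
    have h2 := hKrel c hc
    rw [hK0] at h2
    exact (mul_eq_zero.1 h2).resolve_left h1
  have hgzero : ∀ c : ℝ, g c = 0 := by
    have han : AnalyticOnNhd ℝ g univ := fun x _ => hgan x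
    have hev : g =ᶠ[nhds (2:ℝ)] 0 := by
      filter_upwards [Ioi_mem_nhds (by norm_num : (1:ℝ) < 2)] with c hc
      exact hg1 c hc
    have := han.eqOn_zero_of_preconnected_of_eventuallyEq_zero
      isPreconnected_univ (mem_univ (2:ℝ)) hev
    exact fun c => this (mem_univ c)
  set gn : ℕ → ℝ → ℝ := fun n c => ∫ t in Ioo (0:ℝ) 1,
    t^n * iteratedDeriv n h (c*t) * (Real.sqrt (1-t^2))⁻¹ with hgndef
  have hgn0 : ∀ n c, gn n c = 0 := by
    intro n
    induction n with
    | zero =>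
      intro c
      have he : gn 0 c = g c := by
        rw [hgndef, hgdef]
        simp [iteratedDeriv_zero]
      rw [he]; exact hgzero c
    | succ n ih =>
      intro c
      have hd : HasDerivAt (gn n) (gn (n+1) c) c := gn_hasDerivAt h hanalytic n c
      have hfn : gn n = fun _ => (0:ℝ) := funext ih
      rw [hfn] at hd
      exact ((hasDerivAt_const c (0:ℝ)).unique hd).symm
  -- moments
  have hmom : ∀ n : ℕ, (0:ℝ) < ∫ t in Ioo (0:ℝ) 1, t^n * (Real.sqrt (1-t^2))⁻¹ := by
    intro n
    have hmeas : AEStronglyMeasurable (fun t : ℝ => t^n * (Real.sqrt (1-t^2))⁻¹)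
        (volume.restrict (Ioo (0:ℝ) 1)) := by
      apply ContinuousOn.aestronglyMeasurable _ measurableSet_Ioo
      exact ((continuous_pow n).continuousOn).mul w_contOn
    have hint2 : IntegrableOn (fun t : ℝ => t^n * (Real.sqrt (1-t^2))⁻¹) (Ioo (0:ℝ) 1) := by
      apply Integrable.mono w_integrable hmeas
      filter_upwards [ae_restrict_mem measurableSet_Ioo] with t ht
      have hw0 : (0:ℝ) ≤ (Real.sqrt (1-t^2))⁻¹ := by positivity
      have h3 : |t^n| ≤ 1 := by
        rw [abs_pow]
        exact pow_le_one₀ (abs_nonneg t) (by rw [abs_of_pos ht.1]; exact ht.2.le)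
      calc ‖t^n * (Real.sqrt (1-t^2))⁻¹‖ = |t^n| * (Real.sqrt (1-t^2))⁻¹ := by
            rw [Real.norm_eq_abs, abs_mul, abs_of_nonneg hw0]
        _ ≤ 1 * (Real.sqrt (1-t^2))⁻¹ := mul_le_mul_of_nonneg_right h3 hw0
        _ = (Real.sqrt (1-t^2))⁻¹ := one_mul _
        _ ≤ ‖(Real.sqrt (1-t^2))⁻¹‖ := le_abs_self _
    rw [setIntegral_pos_iff_support_of_nonneg_ae _ hint2]
    · apply lt_of_lt_of_le _ (measure_mono (_ :
        Ioo (0:ℝ) 1 ⊆ Function.support (fun t : ℝ => t^n * (Real.sqrt (1-t^2))⁻¹) ∩ Ioo 0 1))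
      · simp [Real.volume_Ioo]
      · intro t ht
        refine ⟨?_, ht⟩
        have h1 : (0:ℝ) < 1 - t^2 := by nlinarith [ht.1, ht.2]
        have : (0:ℝ) < t^n * (Real.sqrt (1-t^2))⁻¹ :=
          mul_pos (pow_pos ht.1 n) (inv_pos.2 (Real.sqrt_pos.2 h1))
        exact ne_of_gt this
    · filter_upwards [ae_restrict_mem measurableSet_Ioo] with t ht
      have h1 : (0:ℝ) < 1 - t^2 := by nlinarith [ht.1, ht.2]
      exact le_of_lt (mul_pos (pow_pos ht.1 n) (inv_pos.2 (Real.sqrt_pos.2 h1)))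
  have hderiv0 : ∀ n : ℕ, iteratedDeriv n h 0 = 0 := by
    intro n
    have h1 : gn n 0 = iteratedDeriv n h 0 * ∫ t in Ioo (0:ℝ) 1,
        t^n * (Real.sqrt (1-t^2))⁻¹ := by
      rw [hgndef]
      simp only [zero_mul]
      rw [← MeasureTheory.integral_const_mul]
      congr 1
      funext t
      ring
    have h2 := hgn0 n 0
    rw [h1] at h2
    exact (mul_eq_zero.1 h2).resolve_right (ne_of_gt (hmom n))
  -- power series of h at 0 vanishes
  obtain ⟨p, hp⟩ := hanalytic 0
  obtain ⟨r, hpr⟩ := hp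
  have hcoeff : ∀ n : ℕ, ∀ y : ℝ, (p n fun _ => y) = 0 := by
    intro n y
    have h1 := hpr.factorial_smul (1:ℝ) n
    have h2 : (iteratedFDeriv ℝ n h 0 fun _ => (1:ℝ)) = iteratedDeriv n h 0 :=
      iteratedDeriv_eq_iteratedFDeriv.symm
    rw [h2, hderiv0 n] at h1
    have h3 : (p n fun _ => (1:ℝ)) = 0 := by
      have h4 : (n.factorial : ℝ) * (p n fun _ => (1:ℝ)) = 0 := by
        rw [← nsmul_eq_mul]; exact h1
      exact (mul_eq_zero.1 h4).resolve_left (by exact_mod_cast n.factorial_ne_zero)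
    have h5 : p.coeff n = 0 := h3
    rw [FormalMultilinearSeries.apply_eq_pow_smul_coeff, h5, smul_zero]
  have hnear : h =ᶠ[nhds (0:ℝ)] 0 := by
    filter_upwards [EMetric.ball_mem_nhds (0:ℝ) hpr.r_pos] with y hy
    have hsum := hpr.hasSum (by simpa using hy)
    have h0 : HasSum (fun _ : ℕ => (0:ℝ)) (h (0 + y)) := by
      rw [show (fun _ : ℕ => (0:ℝ)) = fun n => p n fun _ => y from
        funext fun n => (hcoeff n y).symm]
      exact hsum
    have := h0.unique hasSum_zero
    simpa using this
  have hall : AnalyticOnNhd ℝ h univ := fun x _ => hanalytic x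
  intro x
  exact hall.eqOn_zero_of_preconnected_of_eventuallyEq_zero
    isPreconnected_univ (mem_univ (0:ℝ)) hnear (mem_univ x)
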